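/- Let f be a homogeneous polynomial on ℝ^n and H a closed subgroup of SL_n(ℝ) with f(hx) = f(x) for all h ∈ H, such that H·π(e) is compact in SL_n(ℝ)/SL_n(ℤ). Suppose that for every w ∈ ℝ^n with f(w) = 0 and every ε > 0 there exists t ∈ H with ‖tw‖ < ε. Then f(z) ≠ 0 for every z ∈ ℤ^n \ {0}. -/

import Mathlib

open MvPolynomial

/-- Topology on `SL_n(ℝ)` induced from the space of matrices. -/
instance SLtop (n : ℕ) : TopologicalSpace (Matrix.SpecialLinearGroup (Fin n) ℝ) :=
  instTopologicalSpaceSubtype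


instance SLtopgrp (n : ℕ) : IsTopologicalGroup (Matrix.SpecialLinearGroup (Fin n) ℝ) where
  continuous_mul := by
    apply Continuous.subtype_mk
    exact ((continuous_subtype_val.comp continuous_fst).matrix_mul
      (continuous_subtype_val.comp continuous_snd))
  continuous_inv := by
    apply Continuous.subtype_mk (f := fun A : Matrix.SpecialLinearGroup (Fin n) ℝ =>
      Matrix.adjugate (A : Matrix (Fin n) (Fin n) ℝ))
    exact continuous_subtype_val.matrix_adjugate

instance matWLC (n : ℕ) : WeaklyLocallyCompactSpace (Matrix (Fin n) (Fin n) ℝ) :=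
  inferInstanceAs (WeaklyLocallyCompactSpace (Fin n → Fin n → ℝ))

instance SLwlc (n : ℕ) : WeaklyLocallyCompactSpace (Matrix.SpecialLinearGroup (Fin n) ℝ) := by
  have h : IsClosed {A : Matrix (Fin n) (Fin n) ℝ | A.det = 1} :=
    isClosed_eq (continuous_id.matrix_det) continuous_const
  exact h.weaklyLocallyCompactSpace

/-- lift compact sets along the quotient map -/
theorem lift_compact {G : Type*} [Group G] [TopologicalSpace G] [IsTopologicalGroup G]
    [WeaklyLocallyCompactSpace G] (Γ : Subgroup G) {K : Set (G ⧸ Γ)} (hK : IsCompact K) :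
    ∃ C : Set G, IsCompact C ∧ K ⊆ QuotientGroup.mk '' C := by
  have h : ∀ q : G ⧸ Γ, ∃ N : Set G,
      IsCompact N ∧ (QuotientGroup.mk '' N : Set (G ⧸ Γ)) ∈ nhds q := by
    intro q
    obtain ⟨g, rfl⟩ := QuotientGroup.mk_surjective q
    obtain ⟨N, hNc, hNn⟩ := exists_compact_mem_nhds g
    exact ⟨N, hNc, ((QuotientGroup.isOpenMap_coe (N := Γ)).image_mem_nhds hNn)⟩
  choose N hNc hNn using h
  obtain ⟨t, -, ht⟩ := hK.elim_nhds_subcover (fun q => QuotientGroup.mk '' N q) fun q _ => hNn q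
  refine ⟨⋃ q ∈ t, N q, t.isCompact_biUnion fun q _ => hNc q, ?_⟩
  simpa [Set.image_iUnion] using ht

theorem norm_mulVec_le {n : ℕ} (A : Matrix (Fin n) (Fin n) ℝ) (x : Fin n → ℝ) :
    ‖A.mulVec x‖ ≤ (∑ i, ∑ j, |A i j|) * ‖x‖ := by
  have hS : (0:ℝ) ≤ ∑ i, ∑ j, |A i j| :=
    Finset.sum_nonneg fun i _ => Finset.sum_nonneg fun j _ => abs_nonneg _
  rw [pi_norm_le_iff_of_nonneg (mul_nonneg hS (norm_nonneg x))]
  intro i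
  calc ‖A.mulVec x i‖ = |∑ j, A i j * x j| := rfl
    _ ≤ ∑ j, |A i j * x j| := Finset.abs_sum_le_sum_abs _ _
    _ = ∑ j, |A i j| * |x j| := by simp [abs_mul]
    _ ≤ ∑ j, |A i j| * ‖x‖ := Finset.sum_le_sum fun j _ =>
        mul_le_mul_of_nonneg_left (norm_le_pi_norm x j) (abs_nonneg _)
    _ = (∑ j, |A i j|) * ‖x‖ := by rw [Finset.sum_mul]
    _ ≤ (∑ i, ∑ j, |A i j|) * ‖x‖ := mul_le_mul_of_nonneg_right
        (Finset.single_le_sum (f := fun i => ∑ j, |A i j|) (fun i _ => Finset.sum_nonneg fun j _ => abs_nonneg _)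
          (Finset.mem_univ i)) (norm_nonneg x)

theorem one_le_norm_int {n : ℕ} (w : Fin n → ℤ) (hw : w ≠ 0) :
    (1:ℝ) ≤ ‖fun i => (w i : ℝ)‖ := by
  obtain ⟨i, hi⟩ := Function.ne_iff.mp hw
  calc (1:ℝ) ≤ |(w i : ℝ)| := by
        rw [← Int.cast_abs]; exact_mod_cast Int.one_le_abs (by simpa using hi)
    _ ≤ ‖fun i => (w i : ℝ)‖ := norm_le_pi_norm (fun i => (w i : ℝ)) i

/-- If `f` is an `H`-invariant homogeneous polynomial, `H` a closed subgroup of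
`SL_n(ℝ)` with compact orbit `H·π(e)` in `SL_n(ℝ)/SL_n(ℤ)`, and the zero set of
`f` is contracted into `0` by `H`, then `f` does not vanish on `ℤ^n \ {0}`. -/
theorem stmt11 (n : ℕ) (f : MvPolynomial (Fin n) ℝ) (hfhom : f.IsHomogeneous n)
    (Γ H : Subgroup (Matrix.SpecialLinearGroup (Fin n) ℝ))
    (hΓ : Γ = (Matrix.SpecialLinearGroup.map (Int.castRingHom ℝ)).range)
    (hH : IsClosed (H : Set (Matrix.SpecialLinearGroup (Fin n) ℝ)))
    (hinv : ∀ h ∈ H, ∀ x : Fin n → ℝ,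
      eval (Matrix.mulVec (h : Matrix (Fin n) (Fin n) ℝ) x) f = eval x f)
    (horb : IsCompact ((QuotientGroup.mk : Matrix.SpecialLinearGroup (Fin n) ℝ →
      Matrix.SpecialLinearGroup (Fin n) ℝ ⧸ Γ) '' (H : Set _)))
    (hcontract : ∀ w : Fin n → ℝ, eval w f = 0 → ∀ ε > 0, ∃ t ∈ H,
      ‖Matrix.mulVec (t : Matrix (Fin n) (Fin n) ℝ) w‖ < ε) :
    ∀ z : Fin n → ℤ, z ≠ 0 → eval (fun i => (z i : ℝ)) f ≠ 0 := by
  intro z hz hzero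
  set zR : Fin n → ℝ := fun i => (z i : ℝ) with hzR
  obtain ⟨C, hCc, hCsub⟩ := lift_compact Γ horb
  set S : Matrix.SpecialLinearGroup (Fin n) ℝ → ℝ :=
    fun k => ∑ i, ∑ j, |((k⁻¹ : Matrix.SpecialLinearGroup (Fin n) ℝ) :
      Matrix (Fin n) (Fin n) ℝ) i j| with hS
  have hScont : Continuous S := by
    have : S = fun k => ∑ i, ∑ j,
        |(Matrix.adjugate ((k : Matrix.SpecialLinearGroup (Fin n) ℝ) :
          Matrix (Fin n) (Fin n) ℝ)) i j| := by
      funext k; simp [hS, Matrix.SpecialLinearGroup.coe_inv]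
    rw [this]
    exact continuous_finset_sum _ fun i _ => continuous_finset_sum _ fun j _ =>
      ((continuous_subtype_val.matrix_adjugate).matrix_elem i j).abs
  obtain ⟨M, hM⟩ := (hCc.image hScont).bddAbove
  set B : ℝ := max M 1 with hB
  have hBpos : (0:ℝ) < B := lt_of_lt_of_le one_pos (le_max_right _ _)
  obtain ⟨t, htH, htlt⟩ := hcontract zR hzero B⁻¹ (by positivity)
  obtain ⟨k, hkC, hk⟩ := hCsub ⟨t, htH, rfl⟩
  have hγ : k⁻¹ * t ∈ Γ := QuotientGroup.eq.mp hk
  rw [hΓ] at hγ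
  obtain ⟨g, hg⟩ := hγ
  set w : Fin n → ℤ := (↑g : Matrix (Fin n) (Fin n) ℤ).mulVec z with hwdef
  have hw : w ≠ 0 := by
    intro h0
    apply hz
    have h1 : (↑(g⁻¹) : Matrix (Fin n) (Fin n) ℤ).mulVec w = z := by
      rw [hwdef, Matrix.mulVec_mulVec, ← Matrix.SpecialLinearGroup.coe_mul,
        inv_mul_cancel, Matrix.SpecialLinearGroup.coe_one, Matrix.one_mulVec]
    rw [← h1, h0, Matrix.mulVec_zero]
  have hcast : (fun i => (w i : ℝ)) =
      ((k⁻¹ * t : Matrix.SpecialLinearGroup (Fin n) ℝ) :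
        Matrix (Fin n) (Fin n) ℝ).mulVec zR := by
    rw [← hg]
    funext i
    simp only [Matrix.mulVec, dotProduct, hwdef,
      Matrix.SpecialLinearGroup.map_apply_coe, RingHom.mapMatrix_apply, Matrix.map_apply]
    push_cast
    rfl
  have hSk : S k ≤ B := le_trans (hM ⟨k, hkC, rfl⟩) (le_max_left _ _)
  have key : (1:ℝ) ≤ B * ‖Matrix.mulVec (t : Matrix (Fin n) (Fin n) ℝ) zR‖ := by
    calc (1:ℝ) ≤ ‖fun i => (w i : ℝ)‖ := one_le_norm_int w hw
      _ = ‖((k⁻¹ : Matrix.SpecialLinearGroup (Fin n) ℝ) :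
            Matrix (Fin n) (Fin n) ℝ).mulVec
            (Matrix.mulVec (t : Matrix (Fin n) (Fin n) ℝ) zR)‖ := by
          rw [hcast, Matrix.mulVec_mulVec, ← Matrix.SpecialLinearGroup.coe_mul]
      _ ≤ S k * ‖Matrix.mulVec (t : Matrix (Fin n) (Fin n) ℝ) zR‖ := norm_mulVec_le _ _
      _ ≤ B * ‖Matrix.mulVec (t : Matrix (Fin n) (Fin n) ℝ) zR‖ :=
          mul_le_mul_of_nonneg_right hSk (norm_nonneg _)
  have : B * ‖Matrix.mulVec (t : Matrix (Fin n) (Fin n) ℝ) zR‖ < B * B⁻¹ :=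
    mul_lt_mul_of_pos_left htlt hBpos
  rw [mul_inv_cancel₀ hBpos.ne'] at this
  linarith
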